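/- arXiv:1410.1114 — 4 statements merged into one kernel-verified Lean document; each statement's English description precedes it below -/
import Mathlib

section
/- Let 0 < m < M, let s ∈ (0,1), and let A_j, B_j (1 ≤ j ≤ n) be positive invertible bounded operators on a complex Hilbert space with m A_j ≤ B_j ≤ M A_j for all j. Then (s^s (M − m)(M m^s − m M^s)^{s−1} / ((1 − s)^{s−1} (M^s − m^s)^s)) · [(Σ_{j=1}^n A_j ♯_s B_j) ♯ (Σ_{j=1}^n A_j ♯_{1−s} B_j)] ≥ (Σ_{j=1}^n A_j) ♯ (Σ_{j=1}^n B_j). -/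
set_option synthInstance.maxHeartbeats 1000000
set_option maxHeartbeats 2000000



variable {H : Type*} [NormedAddCommGroup H] [InnerProductSpace ℂ H] [CompleteSpace H]

/-- Real power `A^r` of a bounded operator, via the continuous functional calculus. -/
noncomputable def opRpow (A : H →L[ℂ] H) (r : ℝ) : H →L[ℂ] H :=
  cfc (fun x : ℝ => x ^ r) A


section Helpers

variable {a b : H →L[ℂ] H}

lemma rc_spec_pos (ha : 0 ≤ a) (hu : IsUnit a) : ∀ x ∈ spectrum ℝ a, 0 < x := by
  intro x hx
  rcases (spectrum_nonneg_of_nonneg ha hx).lt_or_eq with h | h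
  · exact h
  · exact absurd (h ▸ hx) (by rw [spectrum.zero_notMem_iff]; exact hu)

lemma rc_contOn {s : Set ℝ} (r : ℝ) (hs : ∀ x ∈ s, x ≠ 0) :
    ContinuousOn (fun x : ℝ => x ^ r) s := fun x hx =>
  (Real.continuousAt_rpow_const x r (Or.inl (hs x hx))).continuousWithinAt

lemma rc_contOn' (r : ℝ) (ha : 0 ≤ a) (hu : IsUnit a) :
    ContinuousOn (fun x : ℝ => x ^ r) (spectrum ℝ a) :=
  rc_contOn r (fun x hx => (rc_spec_pos ha hu x hx).ne')

lemma opRpow_nonneg (ha : 0 ≤ a) (r : ℝ) : 0 ≤ opRpow a r :=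
  cfc_nonneg (fun x hx => Real.rpow_nonneg (spectrum_nonneg_of_nonneg ha hx) r)

lemma opRpow_selfAdjoint (a : H →L[ℂ] H) (r : ℝ) : IsSelfAdjoint (opRpow a r) :=
  cfc_predicate _ a

lemma opRpow_mul (ha : 0 ≤ a) (hu : IsUnit a) (r₁ r₂ : ℝ) :
    opRpow a r₁ * opRpow a r₂ = opRpow a (r₁ + r₂) := by
  unfold opRpow
  rw [← cfc_mul _ _ a (rc_contOn' r₁ ha hu) (rc_contOn' r₂ ha hu)]
  exact cfc_congr fun x hx => (Real.rpow_add (rc_spec_pos ha hu x hx) r₁ r₂).symm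

lemma opRpow_zero (ha : IsSelfAdjoint a) : opRpow a 0 = 1 := by
  unfold opRpow
  calc cfc (fun x : ℝ => x ^ (0:ℝ)) a = cfc (1 : ℝ → ℝ) a :=
        cfc_congr fun x _ => Real.rpow_zero x
    _ = 1 := cfc_one ℝ a

lemma opRpow_one (ha : IsSelfAdjoint a) : opRpow a 1 = a := by
  unfold opRpow
  calc cfc (fun x : ℝ => x ^ (1:ℝ)) a = cfc (id : ℝ → ℝ) a :=
        cfc_congr fun x _ => Real.rpow_one x
    _ = a := cfc_id ℝ a

lemma opRpow_mul_opRpow_neg (ha : 0 ≤ a) (hu : IsUnit a) (r : ℝ) :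
    opRpow a r * opRpow a (-r) = 1 := by
  rw [opRpow_mul ha hu, add_neg_cancel, opRpow_zero (IsSelfAdjoint.of_nonneg ha)]

lemma opRpow_isUnit (ha : 0 ≤ a) (hu : IsUnit a) (r : ℝ) : IsUnit (opRpow a r) := by
  refine ⟨⟨opRpow a r, opRpow a (-r), opRpow_mul_opRpow_neg ha hu r, ?_⟩, rfl⟩
  rw [opRpow_mul ha hu, neg_add_cancel, opRpow_zero (IsSelfAdjoint.of_nonneg ha)]

lemma opRpow_half_mul_self (ha : 0 ≤ a) (hu : IsUnit a) :
    opRpow a (1/2) * opRpow a (1/2) = a := by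
  rw [opRpow_mul ha hu]; norm_num [opRpow_one (IsSelfAdjoint.of_nonneg ha)]

lemma opRpow_eq_sqrt (ha : 0 ≤ a) : opRpow a (1/2) = CFC.sqrt a := by
  rw [CFC.sqrt_eq_cfc, cfc_nnreal_eq_real _ a ha]
  apply cfc_congr
  intro x hx
  have hx0 : 0 ≤ x := spectrum_nonneg_of_nonneg ha hx
  simp only [Real.coe_sqrt, Real.coe_toNNReal _ hx0, Real.sqrt_eq_rpow]

lemma rc_mem_complex_spectrum {x : ℝ} (c : H →L[ℂ] H) (hx : x ∈ spectrum ℝ c) :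
    (x : ℂ) ∈ spectrum ℂ c := by
  rw [spectrum.mem_iff] at hx ⊢
  rwa [show ((x:ℂ)) = algebraMap ℝ ℂ x from rfl, ← IsScalarTower.algebraMap_apply ℝ ℂ (H →L[ℂ] H)]

lemma rc_sqrt_mono (ha : 0 ≤ a) (hb : 0 ≤ b) (hbu : IsUnit b) (hab : a ≤ b) :
    CFC.sqrt a ≤ CFC.sqrt b := by
  rcases subsingleton_or_nontrivial H with hH | hH
  · exact le_of_eq (Subsingleton.elim _ _)
  have hnorm : ‖CFC.sqrt a * b ^ (-(1/2) : ℝ)‖ ≤ 1 :=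
    (le_iff_norm_sqrt_mul_rpow a b ha (hbu.isStrictlyPositive hb)).mp hab
  have h0b : (0 : NNReal) ∉ spectrum NNReal b := by
    rw [spectrum.zero_notMem_iff]; exact hbu
  have rpadd : ∀ x y : ℝ, (b ^ x * b ^ y : H →L[ℂ] H) = b ^ (x + y) :=
    fun x y => (CFC.rpow_add hbu).symm
  set q : H →L[ℂ] H := b ^ (-(1/4) : ℝ) with hq
  have hq0 : 0 ≤ q := CFC.rpow_nonneg
  have hqq : q * q = (b ^ (-(1/2) : ℝ) : H →L[ℂ] H) := by
    rw [hq, rpadd]; norm_num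
  have hp4 : (b ^ (1/4 : ℝ) : H →L[ℂ] H) * q = 1 := by
    rw [hq, rpadd]; norm_num [CFC.rpow_zero b hb]
  have hq4 : q * (b ^ (1/4 : ℝ) : H →L[ℂ] H) = 1 := by
    rw [hq, rpadd]; norm_num [CFC.rpow_zero b hb]
  set c := q * CFC.sqrt a * q with hc
  have hc0 : 0 ≤ c := conjugate_nonneg_of_nonneg (CFC.sqrt_nonneg a) hq0
  have hcsa : IsSelfAdjoint c := .of_nonneg hc0
  have hcle : c ≤ 1 := by
    have h1 : c ≤ algebraMap ℝ (H →L[ℂ] H) 1 := by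
      refine le_algebraMap_of_spectrum_le (fun x hx => ?_) hcsa
      rcases eq_or_ne x 0 with rfl | hx0
      · exact zero_le_one
      · have hxc : (x : ℂ) ∈ spectrum ℂ (q * (CFC.sqrt a * q)) := by
          have := rc_mem_complex_spectrum c hx
          rwa [hc, mul_assoc] at this
        have hxmem : (x:ℂ) ∈ spectrum ℂ (q * (CFC.sqrt a * q)) \ {0} :=
          ⟨hxc, by simpa using hx0⟩
        rw [spectrum.nonzero_mul_comm] at hxmem
        have hn : ‖(x:ℂ)‖ ≤ ‖CFC.sqrt a * q * q‖ := spectrum.norm_le_norm_of_mem hxmem.1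
        rw [mul_assoc, hqq] at hn
        calc x ≤ |x| := le_abs_self x
          _ = ‖(x:ℂ)‖ := by rw [Complex.norm_real, Real.norm_eq_abs]
          _ ≤ 1 := hn.trans hnorm
    exact h1.trans_eq (map_one _)
  have key : (b ^ (1/4:ℝ) : H →L[ℂ] H) * c * b ^ (1/4:ℝ) ≤
      (b ^ (1/4:ℝ) : H →L[ℂ] H) * 1 * b ^ (1/4:ℝ) :=
    conjugate_le_conjugate_of_nonneg hcle CFC.rpow_nonneg
  have lhs_eq : (b ^ (1/4:ℝ) : H →L[ℂ] H) * c * b ^ (1/4:ℝ) = CFC.sqrt a := by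
    rw [hc]
    calc (b ^ (1/4:ℝ) : H →L[ℂ] H) * (q * CFC.sqrt a * q) * b ^ (1/4:ℝ)
        = ((b ^ (1/4:ℝ) : H →L[ℂ] H) * q) * CFC.sqrt a * (q * b ^ (1/4:ℝ)) := by
          simp only [mul_assoc]
      _ = CFC.sqrt a := by rw [hp4, hq4, one_mul, mul_one]
  have rhs_eq : (b ^ (1/4:ℝ) : H →L[ℂ] H) * 1 * b ^ (1/4:ℝ) = CFC.sqrt b := by
    rw [mul_one, rpadd, CFC.sqrt_eq_rpow]
    norm_num
  rwa [lhs_eq, rhs_eq] at key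


end Helpers

/-- The weighted operator geometric mean
`A ♯_μ B = A^{1/2} (A^{-1/2} B A^{-1/2})^μ A^{1/2}`. -/
noncomputable def wgm (μ : ℝ) (A B : H →L[ℂ] H) : H →L[ℂ] H :=
  opRpow A (1/2) * opRpow (opRpow A (-(1/2)) * B * opRpow A (-(1/2))) μ * opRpow A (1/2)

/-- The operator geometric mean `A ♯ B`. -/
noncomputable def geomMean (A B : H →L[ℂ] H) : H →L[ℂ] H := wgm (1/2) A B

/-- The operator arithmetic mean `A ∇ B = (A + B)/2`. -/
noncomputable def arithMean (A B : H →L[ℂ] H) : H →L[ℂ] H := ((1 : ℝ)/2) • (A + B)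

/-- The operator harmonic mean `A ! B = ((A⁻¹ + B⁻¹)/2)⁻¹`. -/
noncomputable def harmMean (A B : H →L[ℂ] H) : H →L[ℂ] H :=
  Ring.inverse (((1 : ℝ)/2) • (Ring.inverse A + Ring.inverse B))


section GeomMeanLemmas

variable {A B X P U V : H →L[ℂ] H}

lemma rc_neg_half_mul_half (hA : 0 ≤ A) (hAu : IsUnit A) :
    opRpow A (-(1/2)) * opRpow A (1/2) = 1 := by
  rw [opRpow_mul hA hAu]; norm_num [opRpow_zero (IsSelfAdjoint.of_nonneg hA)]

lemma rc_half_mul_neg_half (hA : 0 ≤ A) (hAu : IsUnit A) :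
    opRpow A (1/2) * opRpow A (-(1/2)) = 1 := by
  rw [opRpow_mul hA hAu]; norm_num [opRpow_zero (IsSelfAdjoint.of_nonneg hA)]

lemma rc_inner_nonneg (hA : 0 ≤ A) (hB : 0 ≤ B) :
    0 ≤ opRpow A (-(1/2)) * B * opRpow A (-(1/2)) :=
  conjugate_nonneg_of_nonneg hB (opRpow_nonneg hA _)

lemma rc_inner_isUnit (hA : 0 ≤ A) (hAu : IsUnit A) (hBu : IsUnit B) :
    IsUnit (opRpow A (-(1/2)) * B * opRpow A (-(1/2))) :=
  ((opRpow_isUnit hA hAu _).mul hBu).mul (opRpow_isUnit hA hAu _)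

lemma rc_conj_inner (hA : 0 ≤ A) (hAu : IsUnit A) (B : H →L[ℂ] H) :
    opRpow A (1/2) * (opRpow A (-(1/2)) * B * opRpow A (-(1/2))) * opRpow A (1/2) = B := by
  calc opRpow A (1/2) * (opRpow A (-(1/2)) * B * opRpow A (-(1/2))) * opRpow A (1/2)
      = (opRpow A (1/2) * opRpow A (-(1/2))) * B * (opRpow A (-(1/2)) * opRpow A (1/2)) := by
        simp only [mul_assoc]
    _ = B := by rw [rc_half_mul_neg_half hA hAu, rc_neg_half_mul_half hA hAu, one_mul, mul_one]

lemma geomMean_def (A B : H →L[ℂ] H) : geomMean A B =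
    opRpow A (1/2) * opRpow (opRpow A (-(1/2)) * B * opRpow A (-(1/2))) (1/2) * opRpow A (1/2) :=
  rfl

lemma geomMean_nonneg (hA : 0 ≤ A) (hB : 0 ≤ B) : 0 ≤ geomMean A B :=
  conjugate_nonneg_of_nonneg (opRpow_nonneg (rc_inner_nonneg hA hB) _) (opRpow_nonneg hA _)

lemma geomMean_isUnit (hA : 0 ≤ A) (hAu : IsUnit A) (hB : 0 ≤ B) (hBu : IsUnit B) :
    IsUnit (geomMean A B) :=
  ((opRpow_isUnit hA hAu _).mul
    (opRpow_isUnit (rc_inner_nonneg hA hB) (rc_inner_isUnit hA hAu hBu) _)).mul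
      (opRpow_isUnit hA hAu _)

/-- Uniqueness of the positive solution of the Riccati equation `X B⁻¹ X = A`. -/
lemma rc_riccati {C : H →L[ℂ] H} (hA : 0 ≤ A) (hB : 0 ≤ B) (hBu : IsUnit B) (hX : 0 ≤ X)
    (hCB : C * B = 1) (hBC : B * C = 1) (hXCX : X * C * X = A) : X = geomMean B A := by
  set R := opRpow B (1/2) with hR
  set Ri := opRpow B (-(1/2)) with hRi
  have h1 : R * Ri = 1 := rc_half_mul_neg_half hB hBu
  have h2 : Ri * R = 1 := rc_neg_half_mul_half hB hBu
  have hRR : R * R = B := opRpow_half_mul_self hB hBu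
  have hRiRi : Ri * Ri = C := by
    have hB' : B * (Ri * Ri) = 1 := by
      rw [← hRR]
      calc R * R * (Ri * Ri) = R * (R * Ri) * Ri := by simp only [mul_assoc]
        _ = 1 := by rw [h1, mul_one, h1]
    calc Ri * Ri = 1 * (Ri * Ri) := (one_mul _).symm
      _ = C * (B * (Ri * Ri)) := by rw [← hCB, mul_assoc]
      _ = C := by rw [hB', mul_one]
  have hsq : (Ri * X * Ri) * (Ri * X * Ri) = Ri * A * Ri := by
    calc (Ri * X * Ri) * (Ri * X * Ri) = Ri * (X * (Ri * Ri) * X) * Ri := by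
          simp only [mul_assoc]
      _ = Ri * A * Ri := by rw [hRiRi, ← hXCX]
  have hpos : 0 ≤ Ri * X * Ri := conjugate_nonneg_of_nonneg hX (opRpow_nonneg hB _)
  have hsqrt : CFC.sqrt (Ri * A * Ri) = Ri * X * Ri := CFC.sqrt_unique hsq hpos
  have hAr : 0 ≤ Ri * A * Ri := conjugate_nonneg_of_nonneg hA (opRpow_nonneg hB _)
  have hgm : geomMean B A = R * (Ri * X * Ri) * R := by
    show R * opRpow (Ri * A * Ri) (1/2) * R = _
    rw [opRpow_eq_sqrt hAr]
    rw [hsqrt]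
  rw [hgm]
  calc X = (R * Ri) * X * (Ri * R) := by rw [h1, h2, one_mul, mul_one]
    _ = R * (Ri * X * Ri) * R := by simp only [mul_assoc]

lemma rc_mul_rpow_neg_one (hA : 0 ≤ A) (hAu : IsUnit A) : A * opRpow A (-1) = 1 := by
  nth_rw 1 [← opRpow_one (IsSelfAdjoint.of_nonneg hA)]
  rw [opRpow_mul hA hAu]
  norm_num [opRpow_zero (IsSelfAdjoint.of_nonneg hA)]

/-- `geomMean A B` solves the Riccati equation. -/
lemma rc_geomMean_solves {C : H →L[ℂ] H} (hA : 0 ≤ A) (hAu : IsUnit A) (hB : 0 ≤ B)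
    (hBu : IsUnit B) (hCB : C * B = 1) (hBC : B * C = 1) :
    geomMean A B * C * geomMean A B = A := by
  set R := opRpow A (1/2) with hR
  set Ri := opRpow A (-(1/2)) with hRi
  have h1 : R * Ri = 1 := rc_half_mul_neg_half hA hAu
  have h2 : Ri * R = 1 := rc_neg_half_mul_half hA hAu
  have hRR : R * R = A := opRpow_half_mul_self hA hAu
  set D := Ri * B * Ri with hD
  have hD0 : 0 ≤ D := rc_inner_nonneg hA hB
  have hDu : IsUnit D := rc_inner_isUnit hA hAu hBu
  set S := opRpow D (1/2) with hS
  have hRCR : R * C * R = opRpow D (-1) := by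
    refine left_inv_eq_right_inv ?_ (rc_mul_rpow_neg_one hD0 hDu)
    calc (R * C * R) * D = R * C * (R * Ri) * (B * Ri) := by rw [hD]; simp only [mul_assoc]
      _ = R * (C * B) * Ri := by rw [h1, mul_one]; simp only [mul_assoc]
      _ = 1 := by rw [hCB, mul_one, h1]
  have hSS : S * opRpow D (-1) * S = 1 := by
    rw [hS, opRpow_mul hD0 hDu, opRpow_mul hD0 hDu]
    norm_num [opRpow_zero (IsSelfAdjoint.of_nonneg hD0)]
  have hgm : geomMean A B = R * S * R := rfl
  rw [hgm]
  calc R * S * R * C * (R * S * R) = R * (S * (R * C * R) * S) * R := by simp only [mul_assoc]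
    _ = R * R := by rw [hRCR, hSS, mul_one]
    _ = A := hRR

lemma rc_geomMean_comm (hA : 0 ≤ A) (hAu : IsUnit A) (hB : 0 ≤ B) (hBu : IsUnit B) :
    geomMean A B = geomMean B A := by
  refine rc_riccati hA hB hBu (geomMean_nonneg hA hB) (C := (↑hBu.unit⁻¹ : H →L[ℂ] H))
    ?_ ?_ ?_
  · simpa using hBu.unit.inv_mul
  · simpa using hBu.unit.mul_inv
  · exact rc_geomMean_solves hA hAu hB hBu (by simpa using hBu.unit.inv_mul)
      (by simpa using hBu.unit.mul_inv)

/-- Congruence invariance of the geometric mean. -/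
lemma rc_geomMean_conj (hP : 0 ≤ P) (hPu : IsUnit P) (hU : 0 ≤ U) (hUu : IsUnit U)
    (hV : 0 ≤ V) (hVu : IsUnit V) :
    geomMean (opRpow P (1/2) * U * opRpow P (1/2)) (opRpow P (1/2) * V * opRpow P (1/2)) =
      opRpow P (1/2) * geomMean U V * opRpow P (1/2) := by
  set R := opRpow P (1/2) with hR
  set Ri := opRpow P (-(1/2)) with hRi
  have h1 : R * Ri = 1 := rc_half_mul_neg_half hP hPu
  have h2 : Ri * R = 1 := rc_neg_half_mul_half hP hPu
  have hR0 : 0 ≤ R := opRpow_nonneg hP _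
  have hRi0 : 0 ≤ Ri := opRpow_nonneg hP _
  have hRu : IsUnit R := opRpow_isUnit hP hPu _
  set G := geomMean U V with hG
  have hG0 : 0 ≤ G := geomMean_nonneg hU hV
  have hGu : IsUnit G := geomMean_isUnit hU hUu hV hVu
  have hCU1 : (↑hUu.unit⁻¹ : H →L[ℂ] H) * U = 1 := by simpa using hUu.unit.inv_mul
  have hCU2 : U * (↑hUu.unit⁻¹ : H →L[ℂ] H) = 1 := by simpa using hUu.unit.mul_inv
  have hGCG : G * (↑hUu.unit⁻¹ : H →L[ℂ] H) * G = V := by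
    rw [hG, rc_geomMean_comm hU hUu hV hVu]
    exact rc_geomMean_solves hV hVu hU hUu hCU1 hCU2
  symm
  refine rc_riccati (conjugate_nonneg_of_nonneg hV hR0)
    (conjugate_nonneg_of_nonneg hU hR0) ((hRu.mul hUu).mul hRu)
    (conjugate_nonneg_of_nonneg hG0 hR0)
    (C := Ri * (↑hUu.unit⁻¹ : H →L[ℂ] H) * Ri) ?_ ?_ ?_
  · calc Ri * (↑hUu.unit⁻¹ : H →L[ℂ] H) * Ri * (R * U * R)
        = Ri * (↑hUu.unit⁻¹ : H →L[ℂ] H) * (Ri * R) * (U * R) := by simp only [mul_assoc]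
      _ = Ri * ((↑hUu.unit⁻¹ : H →L[ℂ] H) * U) * R := by rw [h2, mul_one]; simp only [mul_assoc]
      _ = 1 := by rw [hCU1, mul_one, h2]
  · calc R * U * R * (Ri * (↑hUu.unit⁻¹ : H →L[ℂ] H) * Ri)
        = R * U * (R * Ri) * ((↑hUu.unit⁻¹ : H →L[ℂ] H) * Ri) := by simp only [mul_assoc]
      _ = R * (U * (↑hUu.unit⁻¹ : H →L[ℂ] H)) * Ri := by rw [h1, mul_one]; simp only [mul_assoc]
      _ = 1 := by rw [hCU2, mul_one, h1]
  · calc R * G * R * (Ri * (↑hUu.unit⁻¹ : H →L[ℂ] H) * Ri) * (R * G * R)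
        = R * G * (R * Ri) * ((↑hUu.unit⁻¹ : H →L[ℂ] H) * (Ri * R) * G * R) := by
          simp only [mul_assoc]
      _ = R * (G * (↑hUu.unit⁻¹ : H →L[ℂ] H) * G) * R := by
          rw [h1, h2, mul_one, mul_one]; simp only [mul_assoc]
      _ = R * V * R := by rw [hGCG]

lemma rc_geomMean_mono_right {B₁ B₂ : H →L[ℂ] H} (hA : 0 ≤ A) (hAu : IsUnit A)
    (hB₁ : 0 ≤ B₁) (hB₂u : IsUnit B₂) (h : B₁ ≤ B₂) : geomMean A B₁ ≤ geomMean A B₂ := by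
  have hB₂ : 0 ≤ B₂ := hB₁.trans h
  have hC : opRpow A (-(1/2)) * B₁ * opRpow A (-(1/2)) ≤
      opRpow A (-(1/2)) * B₂ * opRpow A (-(1/2)) :=
    conjugate_le_conjugate_of_nonneg h (opRpow_nonneg hA _)
  have hC₁0 := rc_inner_nonneg hA hB₁
  have hC₂0 := rc_inner_nonneg hA hB₂
  have hsqrt : opRpow (opRpow A (-(1/2)) * B₁ * opRpow A (-(1/2))) (1/2) ≤
      opRpow (opRpow A (-(1/2)) * B₂ * opRpow A (-(1/2))) (1/2) := by
    rw [opRpow_eq_sqrt hC₁0, opRpow_eq_sqrt hC₂0]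
    exact rc_sqrt_mono hC₁0 hC₂0 (rc_inner_isUnit hA hAu hB₂u) hC
  exact conjugate_le_conjugate_of_nonneg hsqrt (opRpow_nonneg hA _)

lemma rc_geomMean_mono {A₁ A₂ B₁ B₂ : H →L[ℂ] H} (hA₁ : 0 ≤ A₁) (hA₁u : IsUnit A₁)
    (hA₂u : IsUnit A₂) (hB₁ : 0 ≤ B₁) (hB₁u : IsUnit B₁) (hB₂u : IsUnit B₂)
    (hA : A₁ ≤ A₂) (hB : B₁ ≤ B₂) : geomMean A₁ B₁ ≤ geomMean A₂ B₂ := by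
  have hA₂ : 0 ≤ A₂ := hA₁.trans hA
  have hB₂ : 0 ≤ B₂ := hB₁.trans hB
  calc geomMean A₁ B₁ ≤ geomMean A₁ B₂ := rc_geomMean_mono_right hA₁ hA₁u hB₁ hB₂u hB
    _ = geomMean B₂ A₁ := rc_geomMean_comm hA₁ hA₁u hB₂ hB₂u
    _ ≤ geomMean B₂ A₂ := rc_geomMean_mono_right hB₂ hB₂u hA₁ hA₂u hA
    _ = geomMean A₂ B₂ := rc_geomMean_comm hB₂ hB₂u hA₂ hA₂u

lemma rc_geomMean_cfc (hX : IsSelfAdjoint X) {f g : ℝ → ℝ}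
    (hf : ContinuousOn f (spectrum ℝ X)) (hg : ContinuousOn g (spectrum ℝ X))
    (hfpos : ∀ x ∈ spectrum ℝ X, 0 < f x) (hgpos : ∀ x ∈ spectrum ℝ X, 0 < g x) :
    geomMean (cfc f X) (cfc g X) = cfc (fun t => Real.sqrt (f t * g t)) X := by
  have hfne : ∀ x ∈ spectrum ℝ X, f x ≠ 0 := fun x hx => (hfpos x hx).ne'
  have hinv : ContinuousOn (fun t => (f t)⁻¹) (spectrum ℝ X) := hf.inv₀ hfne
  have hsc : ContinuousOn (fun t => Real.sqrt (f t * g t)) (spectrum ℝ X) :=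
    Real.continuous_sqrt.comp_continuousOn (hf.mul hg)
  have hW0 : 0 ≤ cfc (fun t => Real.sqrt (f t * g t)) X :=
    cfc_nonneg (fun x _ => Real.sqrt_nonneg _)
  have hf0 : 0 ≤ cfc f X := cfc_nonneg (fun x hx => (hfpos x hx).le)
  have hg0 : 0 ≤ cfc g X := cfc_nonneg (fun x hx => (hgpos x hx).le)
  have hfu : IsUnit (cfc f X) := (isUnit_cfc_iff f X hf hX).mpr hfne
  have h1 : cfc (fun t => (f t)⁻¹) X * cfc f X = 1 := by
    rw [← cfc_mul _ _ X hinv hf]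
    calc cfc (fun t => (f t)⁻¹ * f t) X = cfc (1 : ℝ → ℝ) X :=
          cfc_congr (fun x hx => by field_simp [hfne x hx]; rfl)
      _ = 1 := cfc_one ℝ X hX
  have h2 : cfc f X * cfc (fun t => (f t)⁻¹) X = 1 := by
    rw [← cfc_mul _ _ X hf hinv]
    calc cfc (fun t => f t * (f t)⁻¹) X = cfc (1 : ℝ → ℝ) X :=
          cfc_congr (fun x hx => by field_simp [hfne x hx]; rfl)
      _ = 1 := cfc_one ℝ X hX
  have h3 : cfc (fun t => Real.sqrt (f t * g t)) X * cfc (fun t => (f t)⁻¹) X *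
      cfc (fun t => Real.sqrt (f t * g t)) X = cfc g X := by
    rw [← cfc_mul _ _ X hsc hinv, ← cfc_mul (fun t => Real.sqrt (f t * g t) * (f t)⁻¹) _ X (hsc.mul hinv) hsc]
    refine cfc_congr (fun x hx => ?_)
    have hfg : 0 ≤ f x * g x := mul_nonneg (hfpos x hx).le (hgpos x hx).le
    calc Real.sqrt (f x * g x) * (f x)⁻¹ * Real.sqrt (f x * g x)
        = (Real.sqrt (f x * g x) * Real.sqrt (f x * g x)) * (f x)⁻¹ := by ring
      _ = (f x * g x) * (f x)⁻¹ := by rw [Real.mul_self_sqrt hfg]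
      _ = g x := by field_simp [hfne x hx]
  exact (rc_riccati hg0 hf0 hfu hW0 h1 h2 h3).symm

lemma rc_cfc_affine (α β : ℝ) (hX : IsSelfAdjoint X) :
    cfc (fun t : ℝ => α * t + β) X = α • X + β • 1 := by
  rw [cfc_add X (fun t => α * t) (fun _ => β) (by fun_prop) (by fun_prop),
    cfc_const_mul_id α X hX, cfc_const β X hX, Algebra.algebraMap_eq_smul_one]

lemma rc_spectrum_mem {m M' : ℝ} (hX : IsSelfAdjoint X) (hm : m • (1 : H →L[ℂ] H) ≤ X)
    (hM : X ≤ M' • (1 : H →L[ℂ] H)) : ∀ x ∈ spectrum ℝ X, m ≤ x ∧ x ≤ M' := by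
  intro x hx
  rw [← Algebra.algebraMap_eq_smul_one] at hm hM
  exact ⟨(algebraMap_le_iff_le_spectrum hX).mp hm x hx,
    (le_algebraMap_iff_spectrum_le hX).mp hM x hx⟩



lemma rc_young {u α β t : ℝ} (hu : 0 < u) (hu1 : u < 1) (hα : 0 < α) (hβ : 0 < β) (ht : 0 < t) :
    (α/u) ^ u * (β/(1-u)) ^ (1-u) * t ^ u ≤ α * t + β := by
  have h1u : 0 < 1 - u := by linarith
  have key := Real.geom_mean_le_arith_mean2_weighted hu.le h1u.le
    (show 0 ≤ α*t/u by positivity) (show 0 ≤ β/(1-u) by positivity) (by ring)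
  have hre : u*(α*t/u) + (1-u)*(β/(1-u)) = α*t + β := by field_simp
  have hlhs : (α*t/u) ^ u = (α/u) ^ u * t ^ u := by
    rw [show α*t/u = (α/u)*t by ring, Real.mul_rpow (by positivity) ht.le]
  calc (α/u) ^ u * (β/(1-u)) ^ (1-u) * t ^ u = (α*t/u) ^ u * (β/(1-u)) ^ (1-u) := by
        rw [hlhs]; ring
    _ ≤ u*(α*t/u) + (1-u)*(β/(1-u)) := key
    _ = α*t + β := hre

lemma rc_chord {m M u t : ℝ} (hm : 0 < m) (hmM : m < M) (hu : 0 < u) (hu1 : u < 1)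
    (htm : m ≤ t) (htM : t ≤ M) :
    (M ^ u - m ^ u)/(M-m) * t + (M * m ^ u - m * M ^ u)/(M-m) ≤ t ^ u := by
  have hMm : 0 < M - m := by linarith
  have conc := (Real.strictConcaveOn_rpow hu hu1).concaveOn
  have h := conc.2 (Set.mem_Ici.mpr hm.le) (Set.mem_Ici.mpr (hm.trans hmM).le)
    (show 0 ≤ (M-t)/(M-m) from div_nonneg (by linarith) hMm.le)
    (show 0 ≤ (t-m)/(M-m) from div_nonneg (by linarith) hMm.le)
    (show (M-t)/(M-m) + (t-m)/(M-m) = 1 by field_simp; ring)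
  simp only [smul_eq_mul] at h
  have harg : (M-t)/(M-m) * m + (t-m)/(M-m) * M = t := by
    field_simp
    ring
  rw [harg] at h
  calc (M ^ u - m ^ u)/(M-m) * t + (M * m ^ u - m * M ^ u)/(M-m)
      = (M-t)/(M-m) * m ^ u + (t-m)/(M-m) * M ^ u := by
        field_simp
        ring
    _ ≤ t ^ u := h

lemma rc_alpha_pos {m M u : ℝ} (hm : 0 < m) (hmM : m < M) (hu : 0 < u) :
    0 < (M ^ u - m ^ u)/(M-m) :=
  div_pos (sub_pos.mpr (Real.rpow_lt_rpow hm.le hmM hu)) (by linarith)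

lemma rc_beta_num_pos {m M u : ℝ} (hm : 0 < m) (hmM : m < M) (hu : 0 < u) (hu1 : u < 1) :
    0 < M * m ^ u - m * M ^ u := by
  have hM : 0 < M := hm.trans hmM
  have h1 : (1:ℝ) < M/m := (one_lt_div hm).mpr hmM
  have h2 : (M/m) ^ u < (M/m) ^ (1:ℝ) := Real.rpow_lt_rpow_of_exponent_lt h1 hu1
  rw [Real.rpow_one, Real.div_rpow hM.le hm.le] at h2
  have h3 : M ^ u * m < M * m ^ u := by
    rw [div_lt_div_iff₀ (Real.rpow_pos_of_pos hm u) hm] at h2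
    linarith
  linarith

lemma rc_beta_pos {m M u : ℝ} (hm : 0 < m) (hmM : m < M) (hu : 0 < u) (hu1 : u < 1) :
    0 < (M * m ^ u - m * M ^ u)/(M-m) :=
  div_pos (rc_beta_num_pos hm hmM hu hu1) (by linarith)

lemma rc_beta_swap {m M u : ℝ} (hm : 0 < m) (hmM : m < M) :
    M * m ^ u - m * M ^ u = (m*M) ^ u * (M ^ (1-u) - m ^ (1-u)) := by
  have hM : 0 < M := hm.trans hmM
  have hMs : M ^ u * M ^ (1-u) = M := by
    rw [← Real.rpow_add hM, show u+(1-u) = 1 by ring, Real.rpow_one]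
  have hms : m ^ u * m ^ (1-u) = m := by
    rw [← Real.rpow_add hm, show u+(1-u) = 1 by ring, Real.rpow_one]
  calc M * m ^ u - m * M ^ u
      = m ^ u * (M ^ u * M ^ (1-u)) - M ^ u * (m ^ u * m ^ (1-u)) := by rw [hMs, hms]; ring
    _ = (m*M) ^ u * (M ^ (1-u) - m ^ (1-u)) := by
        rw [Real.mul_rpow hm.le hM.le]; ring

lemma rc_key_scalar {m M s : ℝ} (hm : 0 < m) (hmM : m < M) (hs : 0 < s) (hs1 : s < 1) :
    ∀ t, m ≤ t → t ≤ M →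
      Real.sqrt t ≤ (s ^ s * (M - m) * (M * m ^ s - m * M ^ s) ^ (s - 1) /
        ((1 - s) ^ (s - 1) * (M ^ s - m ^ s) ^ s)) *
        Real.sqrt (((M ^ s - m ^ s)/(M-m) * t + (M * m ^ s - m * M ^ s)/(M-m)) *
          ((M ^ (1-s) - m ^ (1-s))/(M-m) * t + (M * m ^ (1-s) - m * M ^ (1-s))/(M-m))) := by
  intro t htm htM
  have hM : 0 < M := hm.trans hmM
  have hMm : 0 < M - m := by linarith
  have h1s : 0 < 1 - s := by linarith
  have ht : 0 < t := lt_of_lt_of_le hm htm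
  set α₁ := (M ^ s - m ^ s)/(M-m) with hα₁
  set β₁ := (M * m ^ s - m * M ^ s)/(M-m) with hβ₁
  set α₂ := (M ^ (1-s) - m ^ (1-s))/(M-m) with hα₂
  set β₂ := (M * m ^ (1-s) - m * M ^ (1-s))/(M-m) with hβ₂
  have hα₁0 : 0 < α₁ := rc_alpha_pos hm hmM hs
  have hβ₁0 : 0 < β₁ := rc_beta_pos hm hmM hs hs1
  have hα₂0 : 0 < α₂ := rc_alpha_pos hm hmM h1s
  have hβ₂0 : 0 < β₂ := by
    have := rc_beta_pos hm hmM h1s (by linarith : 1 - s < 1)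
    exact this
  set c₁ := (α₁/s) ^ s * (β₁/(1-s)) ^ (1-s) with hc₁
  set c₂ := (α₂/(1-s)) ^ (1-s) * (β₂/s) ^ s with hc₂
  set K := s ^ s * (M - m) * (M * m ^ s - m * M ^ s) ^ (s - 1) /
        ((1 - s) ^ (s - 1) * (M ^ s - m ^ s) ^ s) with hK
  have hc₁0 : 0 < c₁ := by positivity
  have hc₂0 : 0 < c₂ := by positivity
  have hN₁ : 0 < M * m ^ s - m * M ^ s := rc_beta_num_pos hm hmM hs hs1
  have hN₂ : 0 < M ^ s - m ^ s := sub_pos.mpr (Real.rpow_lt_rpow hm.le hmM hs)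
  have hK0 : 0 < K := by
    rw [hK]
    have h1 : (0:ℝ) < s ^ s * (M-m) * (M * m ^ s - m * M ^ s) ^ (s-1) := by positivity
    have h2 : (0:ℝ) < (1 - s) ^ (s - 1) * (M ^ s - m ^ s) ^ s := by positivity
    exact div_pos h1 h2
  -- logarithmic identities
  have hlogβ₁ : Real.log β₁ = Real.log (M * m ^ s - m * M ^ s) - Real.log (M - m) := by
    rw [hβ₁, Real.log_div hN₁.ne' hMm.ne']
  have hlogα₁ : Real.log α₁ = Real.log (M ^ s - m ^ s) - Real.log (M - m) := by
    rw [hα₁, Real.log_div hN₂.ne' hMm.ne']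
  have hlogK : Real.log K = s * Real.log s + Real.log (M-m) +
      (s-1) * Real.log (M * m ^ s - m * M ^ s) -
      ((s-1) * Real.log (1-s) + s * Real.log (M ^ s - m ^ s)) := by
    rw [hK, Real.log_div (by positivity) (by positivity), Real.log_mul (by positivity) (by positivity),
      Real.log_mul (by positivity) (by positivity), Real.log_mul (by positivity) (by positivity),
      Real.log_rpow hs, Real.log_rpow h1s, Real.log_rpow hN₁, Real.log_rpow hN₂]
  have hlogc₁ : Real.log c₁ = s * (Real.log α₁ - Real.log s) +
      (1-s) * (Real.log β₁ - Real.log (1-s)) := by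
    rw [hc₁, Real.log_mul (by positivity) (by positivity),
      Real.log_rpow (by positivity), Real.log_rpow (by positivity),
      Real.log_div hα₁0.ne' hs.ne', Real.log_div hβ₁0.ne' h1s.ne']
  have hKc₁ : K * c₁ = 1 := by
    have hlog : Real.log (K * c₁) = 0 := by
      rw [Real.log_mul hK0.ne' hc₁0.ne', hlogK, hlogc₁, hlogα₁, hlogβ₁]; ring
    calc K * c₁ = Real.exp (Real.log (K * c₁)) := (Real.exp_log (by positivity)).symm
      _ = 1 := by rw [hlog, Real.exp_zero]
  -- second identity, using the swap relations
  have hswap₁ : Real.log (M * m ^ s - m * M ^ s) =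
      s * Real.log (m*M) + Real.log (M ^ (1-s) - m ^ (1-s)) := by
    rw [rc_beta_swap (u := s) hm hmM, Real.log_mul (by positivity) ?h2, Real.log_rpow (by positivity)]
    case h2 => exact (sub_pos.mpr (Real.rpow_lt_rpow hm.le hmM h1s)).ne'
  have hswap₂ : Real.log (M * m ^ (1-s) - m * M ^ (1-s)) =
      (1-s) * Real.log (m*M) + Real.log (M ^ s - m ^ s) := by
    have := rc_beta_swap (u := 1-s) hm hmM
    rw [show (1:ℝ)-(1-s) = s by ring] at this
    rw [this, Real.log_mul (by positivity) hN₂.ne', Real.log_rpow (by positivity)]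
  have hlogβ₂ : Real.log β₂ = Real.log (M * m ^ (1-s) - m * M ^ (1-s)) - Real.log (M - m) := by
    rw [hβ₂, Real.log_div (rc_beta_num_pos hm hmM h1s (by linarith)).ne' hMm.ne']
  have hlogα₂ : Real.log α₂ = Real.log (M ^ (1-s) - m ^ (1-s)) - Real.log (M - m) := by
    rw [hα₂, Real.log_div (sub_pos.mpr (Real.rpow_lt_rpow hm.le hmM h1s)).ne' hMm.ne']
  have hlogc₂ : Real.log c₂ = (1-s) * (Real.log α₂ - Real.log (1-s)) +
      s * (Real.log β₂ - Real.log s) := by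
    rw [hc₂, Real.log_mul (by positivity) (by positivity),
      Real.log_rpow (by positivity), Real.log_rpow (by positivity),
      Real.log_div hα₂0.ne' h1s.ne', Real.log_div hβ₂0.ne' hs.ne']
  have hKc₂ : K * c₂ = 1 := by
    have hlog : Real.log (K * c₂) = 0 := by
      rw [Real.log_mul hK0.ne' hc₂0.ne', hlogK, hlogc₂, hlogα₂, hlogβ₂, hswap₁, hswap₂]; ring
    calc K * c₂ = Real.exp (Real.log (K * c₂)) := (Real.exp_log (by positivity)).symm
      _ = 1 := by rw [hlog, Real.exp_zero]
  -- Young bounds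
  have hy1 : c₁ * t ^ s ≤ α₁ * t + β₁ := by
    have := rc_young hs hs1 hα₁0 hβ₁0 ht
    rw [hc₁]; exact this
  have hy2 : c₂ * t ^ (1-s) ≤ α₂ * t + β₂ := by
    have := rc_young h1s (by linarith : 1-s < 1) hα₂0 hβ₂0 ht
    rw [show (1:ℝ)-(1-s) = s by ring] at this
    rw [hc₂]; exact this
  have hmulpos1 : 0 ≤ c₁ * t ^ s := by positivity
  have hprod : (c₁ * t ^ s) * (c₂ * t ^ (1-s)) ≤ (α₁ * t + β₁) * (α₂ * t + β₂) :=
    mul_le_mul hy1 hy2 (by positivity) (by positivity)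
  have hts : t ^ s * t ^ (1-s) = t := by
    rw [← Real.rpow_add ht, show s+(1-s) = 1 by ring, Real.rpow_one]
  have hkey : t ≤ K^2 * ((α₁ * t + β₁) * (α₂ * t + β₂)) := by
    have h2 : K^2 * ((c₁ * t ^ s) * (c₂ * t ^ (1-s))) ≤
        K^2 * ((α₁ * t + β₁) * (α₂ * t + β₂)) := by
      apply mul_le_mul_of_nonneg_left hprod (by positivity)
    calc t = (K * c₁) * (K * c₂) * (t ^ s * t ^ (1-s)) := by rw [hKc₁, hKc₂, hts]; ring
      _ = K^2 * ((c₁ * t ^ s) * (c₂ * t ^ (1-s))) := by ring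
      _ ≤ _ := h2
  calc Real.sqrt t ≤ Real.sqrt (K^2 * ((α₁ * t + β₁) * (α₂ * t + β₂))) :=
        Real.sqrt_le_sqrt hkey
    _ = K * Real.sqrt ((α₁ * t + β₁) * (α₂ * t + β₂)) := by
        rw [Real.sqrt_mul (by positivity), Real.sqrt_sq hK0.le]

section Assembly

variable {H : Type*} [NormedAddCommGroup H] [InnerProductSpace ℂ H] [CompleteSpace H]
variable {A B P Q : H →L[ℂ] H}

lemma rc_smul_isUnit {c : ℝ} (hc : c ≠ 0) (h : IsUnit P) : IsUnit (c • P) := by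
  rw [Algebra.smul_def]
  exact (IsUnit.map (algebraMap ℝ (H →L[ℂ] H)) (isUnit_iff_ne_zero.mpr hc)).mul h

lemma rc_neg_half_conj (hA : 0 ≤ A) (hAu : IsUnit A) :
    opRpow A (-(1/2)) * A * opRpow A (-(1/2)) = 1 := by
  nth_rw 2 [← opRpow_half_mul_self hA hAu]
  calc opRpow A (-(1/2)) * (opRpow A (1/2) * opRpow A (1/2)) * opRpow A (-(1/2))
      = (opRpow A (-(1/2)) * opRpow A (1/2)) * (opRpow A (1/2) * opRpow A (-(1/2))) := by
        simp only [mul_assoc]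
    _ = 1 := by rw [rc_neg_half_mul_half hA hAu, rc_half_mul_neg_half hA hAu, one_mul]

lemma rc_inner_lower {m : ℝ} (hP0 : 0 ≤ P) (hPu : IsUnit P) (h : m • P ≤ Q) :
    m • (1 : H →L[ℂ] H) ≤ opRpow P (-(1/2)) * Q * opRpow P (-(1/2)) := by
  have hc := conjugate_le_conjugate_of_nonneg h (opRpow_nonneg hP0 (-(1/2)))
  rwa [mul_smul_comm, smul_mul_assoc, rc_neg_half_conj hP0 hPu] at hc

lemma rc_inner_upper {M : ℝ} (hP0 : 0 ≤ P) (hPu : IsUnit P) (h : Q ≤ M • P) :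
    opRpow P (-(1/2)) * Q * opRpow P (-(1/2)) ≤ M • (1 : H →L[ℂ] H) := by
  have hc := conjugate_le_conjugate_of_nonneg h (opRpow_nonneg hP0 (-(1/2)))
  rwa [mul_smul_comm, smul_mul_assoc, rc_neg_half_conj hP0 hPu] at hc

lemma rc_conj_affine (α β : ℝ) (hP0 : 0 ≤ P) (hPu : IsUnit P) (hQ0 : 0 ≤ Q) :
    opRpow P (1/2) * cfc (fun t : ℝ => α * t + β)
      (opRpow P (-(1/2)) * Q * opRpow P (-(1/2))) * opRpow P (1/2) = α • Q + β • P := by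
  have hXsa : IsSelfAdjoint (opRpow P (-(1/2)) * Q * opRpow P (-(1/2))) :=
    .of_nonneg (rc_inner_nonneg hP0 hQ0)
  rw [rc_cfc_affine α β hXsa]
  rw [mul_add, add_mul, mul_smul_comm, mul_smul_comm, smul_mul_assoc, smul_mul_assoc, mul_one]
  rw [rc_conj_inner hP0 hPu Q, opRpow_half_mul_self hP0 hPu]

lemma rc_wgm_lower {α β u m M : ℝ} (hm : 0 < m) (hu : 0 < u)
    (hchord : ∀ t, m ≤ t → t ≤ M → α * t + β ≤ t ^ u)
    (hA : 0 ≤ A) (hAu : IsUnit A) (hB : 0 ≤ B) (h1 : m • A ≤ B) (h2 : B ≤ M • A) :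
    α • B + β • A ≤ wgm u A B := by
  have hX0 : 0 ≤ opRpow A (-(1/2)) * B * opRpow A (-(1/2)) := rc_inner_nonneg hA hB
  have hXsa : IsSelfAdjoint (opRpow A (-(1/2)) * B * opRpow A (-(1/2))) := .of_nonneg hX0
  have hspec := rc_spectrum_mem hXsa (rc_inner_lower hA hAu h1) (rc_inner_upper hA hAu h2)
  have hstep : cfc (fun t : ℝ => α * t + β) (opRpow A (-(1/2)) * B * opRpow A (-(1/2))) ≤
      cfc (fun t : ℝ => t ^ u) (opRpow A (-(1/2)) * B * opRpow A (-(1/2))) := by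
    refine cfc_mono (fun x hx => hchord x (hspec x hx).1 (hspec x hx).2) (by fun_prop)
      (rc_contOn u (fun x hx => (hm.trans_le (hspec x hx).1).ne'))
  have hconj := conjugate_le_conjugate_of_nonneg hstep (opRpow_nonneg hA (1/2))
  have hLHS := rc_conj_affine α β hA hAu hB
  rw [hLHS] at hconj
  exact hconj

lemma rc_main_core {α₁ β₁ α₂ β₂ K m M : ℝ}
    (hα₁0 : 0 < α₁) (hβ₁0 : 0 < β₁) (hα₂0 : 0 < α₂) (hβ₂0 : 0 < β₂) (hK0 : 0 < K)
    (hm : 0 < m)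
    (hkey : ∀ t, m ≤ t → t ≤ M →
      Real.sqrt t ≤ K * Real.sqrt ((α₁ * t + β₁) * (α₂ * t + β₂)))
    {P Q T S : H →L[ℂ] H} (hP0 : 0 ≤ P) (hPu : IsUnit P) (hQ0 : 0 ≤ Q) (hQu : IsUnit Q)
    (hQm : m • P ≤ Q) (hQM : Q ≤ M • P)
    (hT : α₁ • Q + β₁ • P ≤ T) (hS : α₂ • Q + β₂ • P ≤ S)
    (hTu : IsUnit T) (hSu : IsUnit S) :
    geomMean P Q ≤ K • geomMean T S := by
  have hR0 : 0 ≤ opRpow P (1/2) := opRpow_nonneg hP0 _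
  have hX0 : 0 ≤ opRpow P (-(1/2)) * Q * opRpow P (-(1/2)) := rc_inner_nonneg hP0 hQ0
  have hXsa : IsSelfAdjoint (opRpow P (-(1/2)) * Q * opRpow P (-(1/2))) := .of_nonneg hX0
  have hspec := rc_spectrum_mem hXsa (rc_inner_lower hP0 hPu hQm) (rc_inner_upper hP0 hPu hQM)
  have hfpos : ∀ x ∈ spectrum ℝ (opRpow P (-(1/2)) * Q * opRpow P (-(1/2))), 0 < α₁ * x + β₁ :=
    fun x hx => add_pos (mul_pos hα₁0 (hm.trans_le (hspec x hx).1)) hβ₁0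
  have hgpos : ∀ x ∈ spectrum ℝ (opRpow P (-(1/2)) * Q * opRpow P (-(1/2))), 0 < α₂ * x + β₂ :=
    fun x hx => add_pos (mul_pos hα₂0 (hm.trans_le (hspec x hx).1)) hβ₂0
  have hfc : ContinuousOn (fun t : ℝ => α₁ * t + β₁)
      (spectrum ℝ (opRpow P (-(1/2)) * Q * opRpow P (-(1/2)))) := by fun_prop
  have hgc : ContinuousOn (fun t : ℝ => α₂ * t + β₂)
      (spectrum ℝ (opRpow P (-(1/2)) * Q * opRpow P (-(1/2)))) := by fun_prop
  have hprodc : Continuous (fun t : ℝ => Real.sqrt ((α₁ * t + β₁) * (α₂ * t + β₂))) :=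
    Real.continuous_sqrt.comp (by fun_prop)
  have hf0 : 0 ≤ cfc (fun t : ℝ => α₁ * t + β₁) (opRpow P (-(1/2)) * Q * opRpow P (-(1/2))) :=
    cfc_nonneg fun x hx => (hfpos x hx).le
  have hg0 : 0 ≤ cfc (fun t : ℝ => α₂ * t + β₂) (opRpow P (-(1/2)) * Q * opRpow P (-(1/2))) :=
    cfc_nonneg fun x hx => (hgpos x hx).le
  have hfu : IsUnit (cfc (fun t : ℝ => α₁ * t + β₁)
      (opRpow P (-(1/2)) * Q * opRpow P (-(1/2)))) :=
    (isUnit_cfc_iff _ _ hfc hXsa).mpr fun x hx => (hfpos x hx).ne'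
  have hgu : IsUnit (cfc (fun t : ℝ => α₂ * t + β₂)
      (opRpow P (-(1/2)) * Q * opRpow P (-(1/2)))) :=
    (isUnit_cfc_iff _ _ hgc hXsa).mpr fun x hx => (hgpos x hx).ne'
  have hgmc := rc_geomMean_cfc hXsa hfc hgc hfpos hgpos
  beta_reduce at hgmc
  have step1 : cfc (fun t : ℝ => Real.sqrt t) (opRpow P (-(1/2)) * Q * opRpow P (-(1/2))) ≤
      cfc (fun t : ℝ => K * Real.sqrt ((α₁ * t + β₁) * (α₂ * t + β₂)))
        (opRpow P (-(1/2)) * Q * opRpow P (-(1/2))) :=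
    cfc_mono (fun x hx => hkey x (hspec x hx).1 (hspec x hx).2)
      Real.continuous_sqrt.continuousOn (continuous_const.mul hprodc).continuousOn
  have step2 : cfc (fun t : ℝ => K * Real.sqrt ((α₁ * t + β₁) * (α₂ * t + β₂)))
      (opRpow P (-(1/2)) * Q * opRpow P (-(1/2))) =
      K • geomMean (cfc (fun t : ℝ => α₁ * t + β₁) (opRpow P (-(1/2)) * Q * opRpow P (-(1/2))))
        (cfc (fun t : ℝ => α₂ * t + β₂) (opRpow P (-(1/2)) * Q * opRpow P (-(1/2)))) := by
    rw [cfc_const_mul K (fun t : ℝ => Real.sqrt ((α₁ * t + β₁) * (α₂ * t + β₂))) _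
      hprodc.continuousOn, ← hgmc]
  have hgm_eq : geomMean P Q = opRpow P (1/2) *
      cfc (fun t : ℝ => Real.sqrt t) (opRpow P (-(1/2)) * Q * opRpow P (-(1/2))) *
      opRpow P (1/2) := by
    rw [geomMean_def]
    congr 1
    congr 1
    exact (cfc_congr fun x _ => Real.sqrt_eq_rpow x).symm
  calc geomMean P Q
      = opRpow P (1/2) * cfc (fun t : ℝ => Real.sqrt t)
          (opRpow P (-(1/2)) * Q * opRpow P (-(1/2))) * opRpow P (1/2) := hgm_eq
    _ ≤ opRpow P (1/2) * cfc (fun t : ℝ => K * Real.sqrt ((α₁ * t + β₁) * (α₂ * t + β₂)))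
          (opRpow P (-(1/2)) * Q * opRpow P (-(1/2))) * opRpow P (1/2) :=
        conjugate_le_conjugate_of_nonneg step1 hR0
    _ = K • (opRpow P (1/2) *
          geomMean (cfc (fun t : ℝ => α₁ * t + β₁) (opRpow P (-(1/2)) * Q * opRpow P (-(1/2))))
            (cfc (fun t : ℝ => α₂ * t + β₂) (opRpow P (-(1/2)) * Q * opRpow P (-(1/2)))) *
          opRpow P (1/2)) := by
        rw [step2, mul_smul_comm, smul_mul_assoc]
    _ = K • geomMean
          (opRpow P (1/2) * cfc (fun t : ℝ => α₁ * t + β₁)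
            (opRpow P (-(1/2)) * Q * opRpow P (-(1/2))) * opRpow P (1/2))
          (opRpow P (1/2) * cfc (fun t : ℝ => α₂ * t + β₂)
            (opRpow P (-(1/2)) * Q * opRpow P (-(1/2))) * opRpow P (1/2)) := by
        rw [rc_geomMean_conj hP0 hPu hf0 hfu hg0 hgu]
    _ = K • geomMean (α₁ • Q + β₁ • P) (α₂ • Q + β₂ • P) := by
        rw [rc_conj_affine α₁ β₁ hP0 hPu hQ0, rc_conj_affine α₂ β₂ hP0 hPu hQ0]
    _ ≤ K • geomMean T S := by
        have hc₁0 : 0 ≤ α₁ • Q + β₁ • P :=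
          add_nonneg (smul_nonneg hα₁0.le hQ0) (smul_nonneg hβ₁0.le hP0)
        have hc₂0 : 0 ≤ α₂ • Q + β₂ • P :=
          add_nonneg (smul_nonneg hα₂0.le hQ0) (smul_nonneg hβ₂0.le hP0)
        have hc₁u : IsUnit (α₁ • Q + β₁ • P) :=
          CStarAlgebra.isUnit_of_le _
            (le_add_of_nonneg_left (smul_nonneg hα₁0.le hQ0)) ((rc_smul_isUnit hβ₁0.ne' hPu).isStrictlyPositive (smul_nonneg hβ₁0.le hP0))
        have hc₂u : IsUnit (α₂ • Q + β₂ • P) :=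
          CStarAlgebra.isUnit_of_le _
            (le_add_of_nonneg_left (smul_nonneg hα₂0.le hQ0)) ((rc_smul_isUnit hβ₂0.ne' hPu).isStrictlyPositive (smul_nonneg hβ₂0.le hP0))
        exact smul_le_smul_of_nonneg_left
          (rc_geomMean_mono hc₁0 hc₁u hTu hc₂0 hc₂u hSu hT hS) hK0.le

end Assembly


end GeomMeanLemmas

/-- Reverse Callebaut inequality:
`(s^s (M−m)(Mm^s − mM^s)^{s−1} / ((1−s)^{s−1}(M^s − m^s)^s)) ·
  [(Σ A_j ♯_s B_j) ♯ (Σ A_j ♯_{1−s} B_j)] ≥ (Σ A_j) ♯ (Σ B_j)`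
whenever `0 < mA_j ≤ B_j ≤ MA_j` and `s ∈ (0,1)`. -/
theorem reverse_callebaut_special
    (m M : ℝ) (hm : 0 < m) (hmM : m < M)
    (s : ℝ) (hs : s ∈ Set.Ioo (0 : ℝ) 1)
    (n : ℕ) (A B : Fin n → (H →L[ℂ] H))
    (hA : ∀ j, 0 ≤ A j) (hAu : ∀ j, IsUnit (A j))
    (hB : ∀ j, 0 ≤ B j) (hBu : ∀ j, IsUnit (B j))
    (h1 : ∀ j, m • A j ≤ B j) (h2 : ∀ j, B j ≤ M • A j) :
    geomMean (∑ j, A j) (∑ j, B j) ≤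
      (s ^ s * (M - m) * (M * m ^ s - m * M ^ s) ^ (s - 1) /
        ((1 - s) ^ (s - 1) * (M ^ s - m ^ s) ^ s)) •
        geomMean (∑ j, wgm s (A j) (B j)) (∑ j, wgm (1 - s) (A j) (B j)) := by
  obtain ⟨hs0, hs1⟩ := hs
  have h1s : 0 < 1 - s := by linarith
  rcases Nat.eq_zero_or_pos n with rfl | hn
  · simp only [Finset.univ_eq_empty, Finset.sum_empty]
    have h0 : opRpow (0 : H →L[ℂ] H) (1/2) = 0 := by
      have hz : (0 : H →L[ℂ] H) = algebraMap ℝ (H →L[ℂ] H) 0 := by simp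
      show cfc (fun x : ℝ => x ^ (1/2 : ℝ)) (0 : H →L[ℂ] H) = 0
      rw [hz, cfc_algebraMap, Real.zero_rpow (by norm_num), map_zero]
    have hgm0 : geomMean (0 : H →L[ℂ] H) 0 = 0 := by
      rw [geomMean_def, h0, zero_mul, zero_mul]
    rw [hgm0, smul_zero]
  · have j₀ : Fin n := ⟨0, hn⟩
    have hP0 : 0 ≤ ∑ j, A j := Finset.sum_nonneg fun j _ => hA j
    have hPu : IsUnit (∑ j, A j) :=
      CStarAlgebra.isUnit_of_le _
        (Finset.single_le_sum (fun j _ => hA j) (Finset.mem_univ j₀)) ((hAu j₀).isStrictlyPositive (hA j₀))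
    have hQm : m • ∑ j, A j ≤ ∑ j, B j := by
      rw [Finset.smul_sum]
      exact Finset.sum_le_sum fun j _ => h1 j
    have hQM : (∑ j, B j) ≤ M • ∑ j, A j := by
      rw [Finset.smul_sum]
      exact Finset.sum_le_sum fun j _ => h2 j
    have hsm0 : 0 ≤ m • ∑ j, A j := smul_nonneg hm.le hP0
    have hQ0 : 0 ≤ ∑ j, B j := hsm0.trans hQm
    have hQu : IsUnit (∑ j, B j) :=
      CStarAlgebra.isUnit_of_le _ hQm ((rc_smul_isUnit hm.ne' hPu).isStrictlyPositive hsm0)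
    have hα₁0 : 0 < (M ^ s - m ^ s)/(M-m) := rc_alpha_pos hm hmM hs0
    have hβ₁0 : 0 < (M * m ^ s - m * M ^ s)/(M-m) := rc_beta_pos hm hmM hs0 hs1
    have hα₂0 : 0 < (M ^ (1-s) - m ^ (1-s))/(M-m) := rc_alpha_pos hm hmM h1s
    have hβ₂0 : 0 < (M * m ^ (1-s) - m * M ^ (1-s))/(M-m) :=
      rc_beta_pos hm hmM h1s (by linarith)
    have hK0 : 0 < s ^ s * (M - m) * (M * m ^ s - m * M ^ s) ^ (s - 1) /
        ((1 - s) ^ (s - 1) * (M ^ s - m ^ s) ^ s) := by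
      have hMm : 0 < M - m := by linarith
      have hN₁ : 0 < M * m ^ s - m * M ^ s := rc_beta_num_pos hm hmM hs0 hs1
      have hN₂ : 0 < M ^ s - m ^ s :=
        sub_pos.mpr (Real.rpow_lt_rpow hm.le hmM hs0)
      have ha : (0:ℝ) < s ^ s * (M-m) * (M * m ^ s - m * M ^ s) ^ (s-1) := by positivity
      have hb : (0:ℝ) < (1 - s) ^ (s - 1) * (M ^ s - m ^ s) ^ s := by positivity
      exact div_pos ha hb
    have hT : ((M ^ s - m ^ s)/(M-m)) • (∑ j, B j) +
        ((M * m ^ s - m * M ^ s)/(M-m)) • (∑ j, A j) ≤ ∑ j, wgm s (A j) (B j) := by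
      rw [Finset.smul_sum, Finset.smul_sum, ← Finset.sum_add_distrib]
      refine Finset.sum_le_sum fun j _ => ?_
      exact rc_wgm_lower hm hs0 (fun t ht ht' => rc_chord hm hmM hs0 hs1 ht ht')
        (hA j) (hAu j) (hB j) (h1 j) (h2 j)
    have hS : ((M ^ (1-s) - m ^ (1-s))/(M-m)) • (∑ j, B j) +
        ((M * m ^ (1-s) - m * M ^ (1-s))/(M-m)) • (∑ j, A j) ≤
        ∑ j, wgm (1-s) (A j) (B j) := by
      rw [Finset.smul_sum, Finset.smul_sum, ← Finset.sum_add_distrib]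
      refine Finset.sum_le_sum fun j _ => ?_
      exact rc_wgm_lower hm h1s (fun t ht ht' => rc_chord hm hmM h1s (by linarith) ht ht')
        (hA j) (hAu j) (hB j) (h1 j) (h2 j)
    have hTu : IsUnit (∑ j, wgm s (A j) (B j)) :=
      CStarAlgebra.isUnit_of_le _ hT
        ((CStarAlgebra.isUnit_of_le _
          (le_add_of_nonneg_left (smul_nonneg hα₁0.le hQ0)) ((rc_smul_isUnit hβ₁0.ne' hPu).isStrictlyPositive (smul_nonneg hβ₁0.le hP0))).isStrictlyPositive
        (add_nonneg (smul_nonneg hα₁0.le hQ0) (smul_nonneg hβ₁0.le hP0)))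
    have hSu : IsUnit (∑ j, wgm (1-s) (A j) (B j)) :=
      CStarAlgebra.isUnit_of_le _ hS
        ((CStarAlgebra.isUnit_of_le _
          (le_add_of_nonneg_left (smul_nonneg hα₂0.le hQ0)) ((rc_smul_isUnit hβ₂0.ne' hPu).isStrictlyPositive (smul_nonneg hβ₂0.le hP0))).isStrictlyPositive
        (add_nonneg (smul_nonneg hα₂0.le hQ0) (smul_nonneg hβ₂0.le hP0)))
    exact rc_main_core hα₁0 hβ₁0 hα₂0 hβ₂0 hK0 hm
      (rc_key_scalar hm hmM hs0 hs1) hP0 hPu hQ0 hQu hQm hQM hT hS hTu hSu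
end

section
/- Let a, b > 0 be real numbers and let ν be a real number with ν ∉ [0,1]. Then ν a + (1 − ν) b + (ν − 1)(√a − √b)² ≤ a^ν b^{1−ν}. -/
/-- For `a, b > 0` and `ν ∉ [0,1]`:
`ν a + (1 − ν) b + (ν − 1)(√a − √b)² ≤ a^ν b^{1−ν}`. -/
theorem young_type_refinement (a b ν : ℝ) (ha : 0 < a) (hb : 0 < b)
    (hν : ν ∉ Set.Icc (0 : ℝ) 1) :
    ν * a + (1 - ν) * b + (ν - 1) * (Real.sqrt a - Real.sqrt b) ^ 2 ≤
      a ^ ν * b ^ (1 - ν) := by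
  simp only [Set.mem_Icc, not_and_or, not_le] at hν
  set sa := Real.sqrt a with hsa
  set sb := Real.sqrt b with hsb
  have hsa0 : 0 < sa := Real.sqrt_pos.2 ha
  have hsb0 : 0 < sb := Real.sqrt_pos.2 hb
  have ha' : sa ^ 2 = a := Real.sq_sqrt ha.le
  have hb' : sb ^ 2 = b := Real.sq_sqrt hb.le
  set t := sb / sa with ht
  have ht0 : 0 < t := div_pos hsb0 hsa0
  have key : 1 + (2 - 2 * ν) * (t - 1) ≤ t ^ (2 - 2 * ν) := by
    rcases hν with h | h
    · have := one_add_mul_self_le_rpow_one_add (s := t - 1) (by linarith)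
        (p := 2 - 2 * ν) (by linarith)
      have h1 : 1 + (t - 1) = t := by ring
      rwa [h1] at this
    · calc 1 + (2 - 2 * ν) * (t - 1) ≤ 1 + (2 - 2 * ν) * Real.log t := by
            nlinarith [Real.log_le_sub_one_of_pos ht0]
        _ ≤ Real.exp ((2 - 2 * ν) * Real.log t) := by
            linarith [Real.add_one_le_exp ((2 - 2 * ν) * Real.log t)]
        _ = t ^ (2 - 2 * ν) := by rw [Real.rpow_def_of_pos ht0, mul_comm]
  have h1 : t ^ (2 - 2 * ν) = b ^ (1 - ν) / a ^ (1 - ν) := by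
    rw [ht, Real.div_rpow hsb0.le hsa0.le, hsb, hsa, Real.sqrt_eq_rpow,
      Real.sqrt_eq_rpow, ← Real.rpow_mul hb.le, ← Real.rpow_mul ha.le]
    have he : (1/2 : ℝ) * (2 - 2 * ν) = 1 - ν := by ring
    rw [he]
  have haa : a ^ ν * a ^ (1 - ν) = a := by
    rw [← Real.rpow_add ha]; norm_num
  have hane : a ^ (1 - ν) ≠ 0 := (Real.rpow_pos_of_pos ha _).ne'
  have hrhs : a * t ^ (2 - 2 * ν) = a ^ ν * b ^ (1 - ν) := by
    rw [h1]
    field_simp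
    linear_combination (-1 : ℝ) * haa
  have hat : a * t = sa * sb := by
    rw [ht]
    field_simp
    linear_combination (-1 : ℝ) * ha'
  have hLHS : ν * a + (1 - ν) * b + (ν - 1) * (sa - sb) ^ 2
      = a * (1 + (2 - 2 * ν) * (t - 1)) := by
    have h2 : a * (1 + (2 - 2 * ν) * (t - 1)) = (2 * ν - 1) * a + (2 - 2 * ν) * (a * t) := by ring
    rw [h2, hat]
    linear_combination (ν - 1) * ha' + (ν - 1) * hb'
  rw [hLHS, ← hrhs]
  exact mul_le_mul_of_nonneg_left key ha.le
end

section
/- Let a, b > 0 be real numbers and let ν be a real number with ν ∉ [0,1]. Then (a + b) + 2(ν − 1)(√a − √b)² ≤ a^ν b^{1−ν} + b^ν a^{1−ν}. -/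
lemma cosh_convexOn : ConvexOn ℝ Set.univ Real.cosh := by
  refine ⟨convex_univ, ?_⟩
  intro x _ y _ p q hp hq hpq
  have h1 := convexOn_exp.2 (Set.mem_univ x) (Set.mem_univ y) hp hq hpq
  have h2 := convexOn_exp.2 (Set.mem_univ (-x)) (Set.mem_univ (-y)) hp hq hpq
  simp only [smul_eq_mul] at h1 h2 ⊢
  rw [Real.cosh_eq, Real.cosh_eq, Real.cosh_eq]
  have hn : -(p * x + q * y) = p * (-x) + q * (-y) := by ring
  rw [hn]
  linarith

lemma cosh_star (s t : ℝ) (hs : 1 ≤ s) :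
    s * (Real.cosh t - 1) ≤ Real.cosh (s * t) - 1 := by
  have hs0 : 0 < s := lt_of_lt_of_le one_pos hs
  have ha : (0:ℝ) ≤ 1 / s := by positivity
  have hb : (0:ℝ) ≤ 1 - 1 / s := by
    have : 1 / s ≤ 1 := by
      rw [div_le_one hs0]; exact hs
    linarith
  have hab : 1 / s + (1 - 1 / s) = 1 := by ring
  have h := cosh_convexOn.2 (Set.mem_univ (s * t)) (Set.mem_univ (0:ℝ)) ha hb hab
  simp only [smul_eq_mul, mul_zero, add_zero, Real.cosh_zero, mul_one] at h
  have ht : 1 / s * (s * t) = t := by field_simp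
  rw [ht] at h
  have h2 := mul_le_mul_of_nonneg_left h hs0.le
  have hinv : s * (1 / s) = 1 := by field_simp
  rw [mul_add, ← mul_assoc, hinv, one_mul, mul_sub, mul_one, hinv] at h2
  linarith

lemma key_exp (ν d : ℝ) (hν : ν < 0 ∨ 1 < ν) :
    Real.exp d + Real.exp (-d) +
      2 * (ν - 1) * (Real.exp (d / 2) - Real.exp (-(d / 2))) ^ 2 ≤
      Real.exp ((2 * ν - 1) * d) + Real.exp (-((2 * ν - 1) * d)) := by
  set s : ℝ := 2 * ν - 1 with hs
  have e1 : Real.exp d + Real.exp (-d) = 2 * Real.cosh d := by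
    rw [Real.cosh_eq]; ring
  have e3 : Real.exp (s * d) + Real.exp (-(s * d)) = 2 * Real.cosh (s * d) := by
    rw [Real.cosh_eq]; ring
  have e2 : (Real.exp (d / 2) - Real.exp (-(d / 2))) ^ 2 = 2 * Real.cosh d - 2 := by
    have hxy : Real.exp (d / 2) * Real.exp (-(d / 2)) = 1 := by
      rw [← Real.exp_add]; simp
    have hx : Real.exp (d / 2) * Real.exp (d / 2) = Real.exp d := by
      rw [← Real.exp_add]; ring_nf
    have hy : Real.exp (-(d / 2)) * Real.exp (-(d / 2)) = Real.exp (-d) := by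
      rw [← Real.exp_add]; ring_nf
    rw [Real.cosh_eq]
    nlinarith [hxy, hx, hy]
  have hK : s * (Real.cosh d - 1) ≤ Real.cosh (s * d) - 1 := by
    rcases hν with h | h
    · have hs0 : s < 0 := by rw [hs]; linarith
      have h1 : 1 ≤ Real.cosh d := Real.one_le_cosh d
      have h2 : 1 ≤ Real.cosh (s * d) := Real.one_le_cosh (s * d)
      nlinarith
    · exact cosh_star s d (by rw [hs]; linarith)
  rw [e3, e2, e1]
  have hsub : s - 1 = 2 * (ν - 1) := by rw [hs]; ring
  nlinarith [hK]

/-- For `a, b > 0` and `ν ∉ [0,1]`: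
`(a + b) + 2(ν − 1)(√a − √b)² ≤ a^ν b^{1−ν} + b^ν a^{1−ν}`. -/
theorem symmetrized_young_type_refinement (a b ν : ℝ) (ha : 0 < a) (hb : 0 < b)
    (hν : ν ∉ Set.Icc (0 : ℝ) 1) :
    (a + b) + 2 * (ν - 1) * (Real.sqrt a - Real.sqrt b) ^ 2 ≤
      a ^ ν * b ^ (1 - ν) + b ^ ν * a ^ (1 - ν) := by
  have hcase : ν < 0 ∨ 1 < ν := by
    simp only [Set.mem_Icc, not_and_or, not_le] at hν
    exact hν
  set p : ℝ := Real.log a with hp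
  set q : ℝ := Real.log b with hq
  set m : ℝ := (p + q) / 2 with hm
  set d : ℝ := (p - q) / 2 with hd
  set s : ℝ := 2 * ν - 1 with hsdef
  have A : a = Real.exp m * Real.exp d := by
    rw [← Real.exp_add, ← Real.exp_log ha]
    congr 1
    rw [hm, hd]; ring
  have B : b = Real.exp m * Real.exp (-d) := by
    rw [← Real.exp_add, ← Real.exp_log hb]
    congr 1
    rw [hm, hd]; ring
  have C : Real.sqrt a = Real.exp (m / 2) * Real.exp (d / 2) := by
    rw [← Real.exp_add, ← Real.exp_log (Real.sqrt_pos.mpr ha), Real.log_sqrt ha.le]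
    congr 1
    rw [hm, hd]; ring
  have D : Real.sqrt b = Real.exp (m / 2) * Real.exp (-(d / 2)) := by
    rw [← Real.exp_add, ← Real.exp_log (Real.sqrt_pos.mpr hb), Real.log_sqrt hb.le]
    congr 1
    rw [hm, hd]; ring
  have E : a ^ ν * b ^ (1 - ν) = Real.exp m * Real.exp (s * d) := by
    rw [Real.rpow_def_of_pos ha, Real.rpow_def_of_pos hb, ← Real.exp_add, ← Real.exp_add]
    congr 1
    rw [hm, hd, hsdef, ← hp, ← hq]; ring
  have F : b ^ ν * a ^ (1 - ν) = Real.exp m * Real.exp (-(s * d)) := by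
    rw [Real.rpow_def_of_pos ha, Real.rpow_def_of_pos hb, ← Real.exp_add, ← Real.exp_add]
    congr 1
    rw [hm, hd, hsdef, ← hp, ← hq]; ring
  have G : Real.exp (m / 2) * Real.exp (m / 2) = Real.exp m := by
    rw [← Real.exp_add]; ring_nf
  have sq : (Real.sqrt a - Real.sqrt b) ^ 2 =
      Real.exp m * (Real.exp (d / 2) - Real.exp (-(d / 2))) ^ 2 := by
    rw [C, D, show (Real.exp (m / 2) * Real.exp (d / 2) -
        Real.exp (m / 2) * Real.exp (-(d / 2))) ^ 2 =
        (Real.exp (m / 2) * Real.exp (m / 2)) *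
          (Real.exp (d / 2) - Real.exp (-(d / 2))) ^ 2 from by ring, G]
  have hkey := mul_le_mul_of_nonneg_left (key_exp ν d hcase) (Real.exp_pos m).le
  rw [E, F, sq, A, B]
  rw [← hsdef] at hkey
  nlinarith [hkey]
end

section
/- Let a > 0 be a real number and s ≥ 1. Then a + a^{−1} + (s − 1)(a + a^{−1} − 2) ≤ a^s + a^{−s}. -/
lemma convexOn_exp_mul (c : ℝ) : ConvexOn ℝ Set.univ (fun s : ℝ => Real.exp (c * s)) := by
  have h := convexOn_exp.comp_affineMap ((LinearMap.lsmul ℝ ℝ c).toAffineMap)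
  simp [Function.comp, smul_eq_mul] at h
  exact h

lemma convexOn_pow_base (a : ℝ) (ha : 0 < a) :
    ConvexOn ℝ Set.univ (fun s : ℝ => a ^ s + a ^ (-s)) := by
  have h1 := convexOn_exp_mul (Real.log a)
  have h2 := convexOn_exp_mul (-Real.log a)
  have := h1.add h2
  convert this using 2 with s
  · rfl
  rw [Real.rpow_def_of_pos ha, Real.rpow_def_of_pos ha]
  simp [Pi.add_apply]

/-- For `a > 0` and `s ≥ 1`: `a + a⁻¹ + (s − 1)(a + a⁻¹ − 2) ≤ a^s + a^{−s}`. -/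
theorem scalar_power_refinement (a s : ℝ) (ha : 0 < a) (hs : 1 ≤ s) :
    a + a⁻¹ + (s - 1) * (a + a⁻¹ - 2) ≤ a ^ s + a ^ (-s) := by
  rcases eq_or_lt_of_le hs with h | h
  · subst h
    simp [Real.rpow_neg_one, Real.rpow_one]
  · have hc := convexOn_pow_base a ha
    have key := hc.slope_mono_adjacent (x := 0) (y := 1) (z := s)
      (Set.mem_univ _) (Set.mem_univ _) one_pos h
    have h0 : a ^ (0:ℝ) + a ^ (-(0:ℝ)) = 2 := by norm_num
    have h1 : a ^ (1:ℝ) + a ^ (-(1:ℝ)) = a + a⁻¹ := by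
      rw [Real.rpow_one, Real.rpow_neg_one]
    rw [h0, h1] at key
    have hs1 : 0 < s - 1 := by linarith
    rw [div_le_div_iff₀ (by norm_num) hs1] at key
    nlinarith [key]
end
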